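/- Let A, Â ∈ ℝ^{m×n} and 1 ≤ r < min(m,n). Let U_r, V_r (respectively Û_r, V̂_r) be matrices whose orthonormal columns are the first r left and right singular vectors of A (respectively Â), and let σ_r(A) ≥ σ_{r+1}(A) denote the r-th and (r+1)-th largest singular values of A. Then (σ_r(A) − σ_{r+1}(A)) · max{‖sin Θ(V_r, V̂_r)‖, ‖sin Θ(U_r, Û_r)‖} ≤ 2 ‖A − Â‖, where ‖·‖ is the spectral norm; equivalently, whenever σ_r(A) − σ_{r+1}(A) > 0, max{‖sin Θ(V_r, V̂_r)‖, ‖sin Θ(U_r, Û_r)‖} ≤ 2‖A − Â‖ / (σ_r(A) − σ_{r+1}(A)). -/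

import Mathlib

set_option maxHeartbeats 1000000


open scoped BigOperators
open Matrix

noncomputable section

namespace MJ

/-- Euclidean (ℓ2) norm of a finite vector. -/
def l2 {k : ℕ} (v : Fin k → ℝ) : ℝ := Real.sqrt (∑ j, v j ^ 2)

/-- ℓ1 norm of a finite vector. -/
def l1 {k : ℕ} (v : Fin k → ℝ) : ℝ := ∑ i, |v i|

/-- Maximum absolute row sum (matrix ∞-norm). -/
def rowSumNorm {m k : ℕ} (A : Matrix (Fin m) (Fin k) ℝ) : ℝ := ⨆ i, ∑ j, |A i j|

/-- Frobenius norm. -/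
def frob {m k : ℕ} (A : Matrix (Fin m) (Fin k) ℝ) : ℝ := Real.sqrt (∑ i, ∑ j, A i j ^ 2)

/-- Spectral norm (ℓ2 operator norm). -/
def spec {m k : ℕ} (A : Matrix (Fin m) (Fin k) ℝ) : ℝ :=
  sSup {c : ℝ | ∃ x : Fin k → ℝ, l2 x ≤ 1 ∧ c = l2 (A.mulVec x)}

/-- `i`-th largest singular value (1-indexed), via Courant–Fischer max-min. -/
def singVal {m k : ℕ} (A : Matrix (Fin m) (Fin k) ℝ) (i : ℕ) : ℝ :=
  sSup {c : ℝ | ∃ V : Submodule ℝ (Fin k → ℝ), Module.finrank ℝ V = i ∧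
    ∀ x ∈ V, c * l2 x ≤ l2 (A.mulVec x)}

/-- Row-stochastic matrix. -/
def RowStochastic {k : ℕ} (P : Matrix (Fin k) (Fin k) ℝ) : Prop :=
  (∀ i j, 0 ≤ P i j) ∧ ∀ i, ∑ j, P i j = 1

/-- Probability vector. -/
def IsProbVec {k : ℕ} (v : Fin k → ℝ) : Prop := (∀ i, 0 ≤ v i) ∧ ∑ i, v i = 1

/-- Stationary distribution: a probability vector with πᵀ P = πᵀ. -/
def IsStationary {k : ℕ} (P : Matrix (Fin k) (Fin k) ℝ) (piv : Fin k → ℝ) : Prop :=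
  IsProbVec piv ∧ ∀ j, ∑ i, piv i * P i j = piv j

/-- Ergodicity (irreducible + aperiodic ⟺ primitive for finite chains). -/
def Ergodic' {k : ℕ} (P : Matrix (Fin k) (Fin k) ℝ) : Prop :=
  ∃ t : ℕ, ∀ i j, 0 < (P ^ t) i j

/-- ε-mixing time: τ(ε) = min{t : max_i (1/2)‖(P^t)(i,:) − π‖₁ ≤ ε}. -/
def mixingTime {k : ℕ} (P : Matrix (Fin k) (Fin k) ℝ) (piv : Fin k → ℝ) (ε : ℝ) : ℕ :=
  sInf {t : ℕ | ∀ i, (1/2) * ∑ j, |(P ^ t) i j - piv j| ≤ ε}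

/-- Full SVD decomposition predicate: A = U S Vᵀ with U, V orthogonal and S diagonal
with nonnegative entries arranged in descending order. -/
def IsSVD {m k : ℕ} (A : Matrix (Fin m) (Fin k) ℝ) (U : Matrix (Fin m) (Fin m) ℝ)
    (S : Matrix (Fin m) (Fin k) ℝ) (V : Matrix (Fin k) (Fin k) ℝ) : Prop :=
  Uᵀ * U = 1 ∧ Vᵀ * V = 1 ∧ A = U * S * Vᵀ ∧
  (∀ (i : Fin m) (j : Fin k), (i : ℕ) ≠ (j : ℕ) → S i j = 0) ∧
  (∀ i j, 0 ≤ S i j) ∧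
  (∀ (a b : ℕ) (ham : a < m) (hak : a < k) (hbm : b < m) (hbk : b < k),
    a ≤ b → S ⟨b, hbm⟩ ⟨b, hbk⟩ ≤ S ⟨a, ham⟩ ⟨a, hak⟩)

/-- `Ur` consists of the first `r` left singular vectors of `A`. -/
def IsLeftSingTrunc {m k : ℕ} (A : Matrix (Fin m) (Fin k) ℝ) (r : ℕ)
    (Ur : Matrix (Fin m) (Fin r) ℝ) : Prop :=
  ∃ U S V, IsSVD A U S V ∧ ∃ h : r ≤ m, ∀ (i : Fin m) (j : Fin r),
    Ur i j = U i ⟨(j : ℕ), lt_of_lt_of_le j.isLt h⟩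

/-- `Vr` consists of the first `r` right singular vectors of `A`. -/
def IsRightSingTrunc {m k : ℕ} (A : Matrix (Fin m) (Fin k) ℝ) (r : ℕ)
    (Vr : Matrix (Fin k) (Fin r) ℝ) : Prop :=
  IsLeftSingTrunc Aᵀ r Vr

/-- The matrix (I − EEᵀ)(FFᵀ), whose spectral/Frobenius norm is the sinΘ distance
between the column spaces of `E` and `F` (for `E`, `F` with orthonormal columns). -/
def sinThetaMat {k r : ℕ} (E F : Matrix (Fin k) (Fin r) ℝ) : Matrix (Fin k) (Fin k) ℝ :=
  (1 - E * Eᵀ) * (F * Fᵀ)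

/-- Membership matrix: each row has exactly one entry 1 and all others 0. -/
def IsMembership {k r : ℕ} (M : Matrix (Fin k) (Fin r) ℝ) : Prop :=
  ∀ i, ∃ j, M i j = 1 ∧ ∀ j', j' ≠ j → M i j' = 0

/-- A family of finsets forming a partition of `Fin k`. -/
def IsPartition {k r : ℕ} (Ω : Fin r → Finset (Fin k)) : Prop :=
  (∀ a b, a ≠ b → Disjoint (Ω a) (Ω b)) ∧ Finset.univ.biUnion Ω = Finset.univ

/-- `P` is aggregatable w.r.t. partition `Ω`: rows within the same cluster coincide. -/
def Aggregatable {k r : ℕ} (P : Matrix (Fin k) (Fin k) ℝ) (Ω : Fin r → Finset (Fin k)) : Prop :=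
  ∀ s, ∀ i ∈ Ω s, ∀ j ∈ Ω s, ∀ c, P i c = P j c

/-- Misclustering rate: min over bijections of the relative misclustering counts. -/
def MR {k r : ℕ} (Ω Ωh : Fin r → Finset (Fin k)) : ℝ :=
  ⨅ σ : Equiv.Perm (Fin r), ∑ j, (((Ω j) \ (Ωh (σ j))).card : ℝ) / ((Ω j).card : ℝ)

/-- k-means objective on the rows of `U`. -/
def kmeansObj {k r : ℕ} (U : Matrix (Fin k) (Fin r) ℝ) (Ωh : Fin r → Finset (Fin k))
    (c : Fin r → Fin r → ℝ) : ℝ :=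
  ∑ s, ∑ i ∈ Ωh s, ∑ j, (U i j - c s j) ^ 2

/-- Optimal value of the k-means problem on the rows of `U`. -/
def kmeansOpt {k r : ℕ} (U : Matrix (Fin k) (Fin r) ℝ) : ℝ :=
  sInf {v : ℝ | ∃ Ωh c, IsPartition Ωh ∧ v = kmeansObj U Ωh c}

/-- A (1+ε) approximate solution of the k-means problem on the rows of `U`. -/
def IsApproxKMeans {k r : ℕ} (U : Matrix (Fin k) (Fin r) ℝ) (ε : ℝ)
    (Ωh : Fin r → Finset (Fin k)) (c : Fin r → Fin r → ℝ) : Prop :=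
  IsPartition Ωh ∧ kmeansObj U Ωh c ≤ (1 + ε) * kmeansOpt U

/-- Optimal value of the k-means problem in membership-matrix form. -/
def kmeansOptM {k r : ℕ} (U : Matrix (Fin k) (Fin r) ℝ) : ℝ :=
  sInf {v : ℝ | ∃ (M : Matrix (Fin k) (Fin r) ℝ) (C : Matrix (Fin r) (Fin r) ℝ),
    IsMembership M ∧ v = frob (M * C - U) ^ 2}

/-- Number of t ∈ {1,…,N} with x_{t−1} = i. -/
def countState {k N : ℕ} (x : Fin (N+1) → Fin k) (i : Fin k) : ℕ :=
  (Finset.univ.filter fun t : Fin N => x t.castSucc = i).card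

/-- Number of t ∈ {1,…,N} with x_{t−1} = i and x_t = j. -/
def countTrans {k N : ℕ} (x : Fin (N+1) → Fin k) (i j : Fin k) : ℕ :=
  (Finset.univ.filter fun t : Fin N => x t.castSucc = i ∧ x t.succ = j).card

/-- Empirical state distribution. -/
def empPi {k N : ℕ} (x : Fin (N+1) → Fin k) (i : Fin k) : ℝ :=
  (countState x i : ℝ) / (N : ℝ)

/-- Empirical frequency matrix. -/
def empF {k N : ℕ} (x : Fin (N+1) → Fin k) : Matrix (Fin k) (Fin k) ℝ :=
  Matrix.of fun i j => (countTrans x i j : ℝ) / (N : ℝ)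

/-- Empirical transition matrix (uniform row if a state never occurs). -/
def empMatrix {k N : ℕ} (x : Fin (N+1) → Fin k) : Matrix (Fin k) (Fin k) ℝ :=
  Matrix.of fun i j =>
    if countState x i = 0 then 1 / (k : ℝ)
    else (countTrans x i j : ℝ) / (countState x i : ℝ)

/-- Probability weight of a finite Markov-chain path with initial distribution `pi0`. -/
def pathWeight {k : ℕ} (N : ℕ) (P : Matrix (Fin k) (Fin k) ℝ) (pi0 : Fin k → ℝ)
    (x : Fin (N+1) → Fin k) : ℝ :=
  pi0 (x 0) * ∏ t : Fin N, P (x t.castSucc) (x t.succ)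

/-- Probability of an event over Markov-chain trajectories of length N+1. -/
def pathProb {k : ℕ} (N : ℕ) (P : Matrix (Fin k) (Fin k) ℝ) (pi0 : Fin k → ℝ)
    (E : Set ((Fin (N+1)) → Fin k)) : ℝ :=
  ∑ x : Fin (N+1) → Fin k, E.indicator (pathWeight N P pi0) x

namespace W

lemma l2_eq_norm {k : ℕ} (v : Fin k → ℝ) :
    l2 v = ‖(WithLp.equiv 2 (Fin k → ℝ)).symm v‖ := by
  rw [EuclideanSpace.norm_eq]
  simp [l2, Real.norm_eq_abs, sq_abs]

lemma l2_nonneg {k : ℕ} (v : Fin k → ℝ) : 0 ≤ l2 v := Real.sqrt_nonneg _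
lemma l2_zero {k : ℕ} : l2 (0 : Fin k → ℝ) = 0 := by simp [l2]
lemma l2_eq_zero {k : ℕ} {v : Fin k → ℝ} : l2 v = 0 ↔ v = 0 := by
  rw [l2_eq_norm, norm_eq_zero]
  constructor
  · intro h; simpa using congrArg (WithLp.equiv 2 (Fin k → ℝ)) h
  · intro h; rw [h]; simp

lemma l2_neg {k : ℕ} (v : Fin k → ℝ) : l2 (-v) = l2 v := by simp [l2]
lemma l2_smul {k : ℕ} (c : ℝ) (v : Fin k → ℝ) : l2 (c • v) = |c| * l2 v := by
  simp only [l2, Pi.smul_apply, smul_eq_mul, mul_pow, ← Finset.mul_sum]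
  rw [Real.sqrt_mul (sq_nonneg c), Real.sqrt_sq_eq_abs]

lemma l2_add_le {k : ℕ} (v w : Fin k → ℝ) : l2 (v + w) ≤ l2 v + l2 w := by
  simpa [l2_eq_norm] using norm_add_le ((WithLp.equiv 2 (Fin k → ℝ)).symm v)
    ((WithLp.equiv 2 (Fin k → ℝ)).symm w)

lemma l2_sq {k : ℕ} (v : Fin k → ℝ) : l2 v ^ 2 = ∑ j, v j ^ 2 := by
  rw [l2, Real.sq_sqrt]; positivity

lemma dot_le_l2_mul_l2 {k : ℕ} (v w : Fin k → ℝ) : v ⬝ᵥ w ≤ l2 v * l2 w := by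
  have h := Finset.sum_mul_sq_le_sq_mul_sq Finset.univ v w
  have h2 : v ⬝ᵥ w ≤ |v ⬝ᵥ w| := le_abs_self _
  refine h2.trans ?_
  rw [← Real.sqrt_sq_eq_abs]
  rw [l2, l2, ← Real.sqrt_mul (by positivity)]
  exact Real.sqrt_le_sqrt (by simpa [dotProduct] using h)

lemma l2_le_of_sq_le_sq {k l : ℕ} {v : Fin k → ℝ} {c : ℝ} (hc : 0 ≤ c) {w : Fin l → ℝ}
    (h : ∑ j, v j ^ 2 ≤ c ^ 2 * ∑ j, w j ^ 2) : l2 v ≤ c * l2 w := by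
  have : c = Real.sqrt (c ^ 2) := (Real.sqrt_sq hc).symm
  rw [l2, l2, this, ← Real.sqrt_mul (sq_nonneg c)]
  exact Real.sqrt_le_sqrt h

-- spec basics
lemma spec_set_nonempty {m k : ℕ} (A : Matrix (Fin m) (Fin k) ℝ) :
    {c : ℝ | ∃ x : Fin k → ℝ, l2 x ≤ 1 ∧ c = l2 (A.mulVec x)}.Nonempty :=
  ⟨l2 (A.mulVec 0), 0, by simp [l2_zero], rfl⟩

lemma l2_mulVec_le_frob {m k : ℕ} (A : Matrix (Fin m) (Fin k) ℝ) (x : Fin k → ℝ)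
    (hx : l2 x ≤ 1) : l2 (A.mulVec x) ≤ Real.sqrt (∑ i, ∑ j, A i j ^ 2) := by
  have hxs : ∑ j, x j ^ 2 ≤ 1 := by
    have := Real.sqrt_le_sqrt (le_of_eq (l2_sq x).symm)
    nlinarith [l2_sq x, l2_nonneg x, sq_nonneg (l2 x)]
  rw [l2]
  apply Real.sqrt_le_sqrt
  apply Finset.sum_le_sum
  intro i _
  calc (A.mulVec x i) ^ 2 = (∑ j, A i j * x j) ^ 2 := by rfl
    _ ≤ (∑ j, A i j ^ 2) * ∑ j, x j ^ 2 := Finset.sum_mul_sq_le_sq_mul_sq _ _ _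
    _ ≤ (∑ j, A i j ^ 2) * 1 := by
        apply mul_le_mul_of_nonneg_left hxs; positivity
    _ = ∑ j, A i j ^ 2 := mul_one _

lemma spec_bddAbove {m k : ℕ} (A : Matrix (Fin m) (Fin k) ℝ) :
    BddAbove {c : ℝ | ∃ x : Fin k → ℝ, l2 x ≤ 1 ∧ c = l2 (A.mulVec x)} := by
  refine ⟨Real.sqrt (∑ i, ∑ j, A i j ^ 2), ?_⟩
  rintro c ⟨x, hx, rfl⟩
  exact l2_mulVec_le_frob A x hx

lemma le_spec {m k : ℕ} (A : Matrix (Fin m) (Fin k) ℝ) {x : Fin k → ℝ} (hx : l2 x ≤ 1) :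
    l2 (A.mulVec x) ≤ spec A :=
  le_csSup (spec_bddAbove A) ⟨x, hx, rfl⟩

lemma spec_nonneg {m k : ℕ} (A : Matrix (Fin m) (Fin k) ℝ) : 0 ≤ spec A := by
  have := le_spec A (x := 0) (by simp [l2_zero])
  simpa [l2_zero] using (l2_nonneg (A.mulVec 0)).trans this

lemma spec_le {m k : ℕ} {A : Matrix (Fin m) (Fin k) ℝ} {c : ℝ}
    (h : ∀ x : Fin k → ℝ, l2 x ≤ 1 → l2 (A.mulVec x) ≤ c) : spec A ≤ c := by
  apply Real.sSup_le
  · rintro d ⟨x, hx, rfl⟩; exact h x hx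
  · simpa [l2_zero] using (l2_nonneg (A.mulVec 0)).trans (h 0 (by simp [l2_zero]))

lemma l2_mulVec_le {m k : ℕ} (A : Matrix (Fin m) (Fin k) ℝ) (x : Fin k → ℝ) :
    l2 (A.mulVec x) ≤ spec A * l2 x := by
  rcases eq_or_ne x 0 with rfl | hx
  · simp [l2_zero]
  · have hpos : 0 < l2 x := lt_of_le_of_ne (l2_nonneg x) (fun h => hx (l2_eq_zero.mp h.symm))
    have h1 : l2 ((l2 x)⁻¹ • x) ≤ 1 := by
      rw [l2_smul, abs_of_nonneg (by positivity), inv_mul_cancel₀ hpos.ne']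
    have := le_spec A h1
    rw [Matrix.mulVec_smul, l2_smul, abs_of_nonneg (by positivity)] at this
    calc l2 (A.mulVec x) = l2 x * ((l2 x)⁻¹ * l2 (A.mulVec x)) := by
          field_simp
      _ ≤ l2 x * spec A := by
          apply mul_le_mul_of_nonneg_left this hpos.le
      _ = spec A * l2 x := mul_comm _ _

-- chunk 2
lemma l2_sq_eq_dot {k : ℕ} (v : Fin k → ℝ) : l2 v ^ 2 = v ⬝ᵥ v := by
  rw [l2_sq]; simp [dotProduct, sq]

lemma mulVec_dot {mm kk : ℕ} (M : Matrix (Fin mm) (Fin kk) ℝ) (x : Fin kk → ℝ)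
    (y : Fin mm → ℝ) : (M.mulVec x) ⬝ᵥ y = x ⬝ᵥ (Mᵀ.mulVec y) := by
  simp only [Matrix.mulVec, dotProduct, Matrix.transpose_apply,
    Finset.sum_mul, Finset.mul_sum]
  rw [Finset.sum_comm]
  exact Finset.sum_congr rfl fun j _ => Finset.sum_congr rfl fun i _ => by ring

lemma dot_mulVec' {mm kk : ℕ} (M : Matrix (Fin mm) (Fin kk) ℝ) (y : Fin mm → ℝ)
    (x : Fin kk → ℝ) : y ⬝ᵥ (M.mulVec x) = (Mᵀ.mulVec y) ⬝ᵥ x := by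
  rw [dotProduct_comm, mulVec_dot, dotProduct_comm]

lemma mulVec_dot_mulVec {m k : ℕ} (M : Matrix (Fin m) (Fin k) ℝ) (x y : Fin k → ℝ) :
    (M.mulVec x) ⬝ᵥ (M.mulVec y) = x ⬝ᵥ ((Mᵀ * M).mulVec y) := by
  rw [mulVec_dot, Matrix.mulVec_mulVec]

lemma l2_mulVec_iso {m k : ℕ} {M : Matrix (Fin m) (Fin k) ℝ} (h : Mᵀ * M = 1)
    (x : Fin k → ℝ) : l2 (M.mulVec x) = l2 x := by
  have h1 : l2 (M.mulVec x) ^ 2 = l2 x ^ 2 := by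
    rw [l2_sq_eq_dot, l2_sq_eq_dot, mulVec_dot_mulVec, h, Matrix.one_mulVec]
  nlinarith [l2_nonneg (M.mulVec x), l2_nonneg x]

lemma l2_transpose_mulVec_le {m k : ℕ} {M : Matrix (Fin m) (Fin k) ℝ} (h : Mᵀ * M = 1)
    (x : Fin m → ℝ) : l2 (Mᵀ.mulVec x) ≤ l2 x := by
  have h1 : l2 (Mᵀ.mulVec x) ^ 2 = x ⬝ᵥ (M.mulVec (Mᵀ.mulVec x)) := by
    rw [l2_sq_eq_dot, mulVec_dot, Matrix.transpose_transpose, dotProduct_comm]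
  have h2 : x ⬝ᵥ (M.mulVec (Mᵀ.mulVec x)) ≤ l2 x * l2 (Mᵀ.mulVec x) := by
    have := dot_le_l2_mul_l2 x (M.mulVec (Mᵀ.mulVec x))
    rwa [l2_mulVec_iso h] at this
  nlinarith [l2_nonneg (Mᵀ.mulVec x), l2_nonneg x]

lemma spec_transpose_le {m k : ℕ} (M : Matrix (Fin m) (Fin k) ℝ) : spec Mᵀ ≤ spec M := by
  apply spec_le
  intro x hx
  have h1 : l2 (Mᵀ.mulVec x) ^ 2 ≤ l2 x * (spec M * l2 (Mᵀ.mulVec x)) := by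
    rw [l2_sq_eq_dot, mulVec_dot, Matrix.transpose_transpose]
    calc x ⬝ᵥ (M.mulVec (Mᵀ.mulVec x))
        ≤ l2 x * l2 (M.mulVec (Mᵀ.mulVec x)) := dot_le_l2_mul_l2 _ _
      _ ≤ l2 x * (spec M * l2 (Mᵀ.mulVec x)) := by
          apply mul_le_mul_of_nonneg_left (l2_mulVec_le _ _) (l2_nonneg x)
  have h2 : l2 x * (spec M * l2 (Mᵀ.mulVec x)) ≤ spec M * l2 (Mᵀ.mulVec x) := by
    apply mul_le_of_le_one_left (mul_nonneg (spec_nonneg M) (l2_nonneg _)) hx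
  nlinarith [l2_nonneg (Mᵀ.mulVec x), spec_nonneg M]

lemma spec_add_le {m k : ℕ} (M N : Matrix (Fin m) (Fin k) ℝ) :
    spec (M + N) ≤ spec M + spec N := by
  apply spec_le
  intro x hx
  rw [Matrix.add_mulVec]
  exact (l2_add_le _ _).trans (add_le_add (le_spec M hx) (le_spec N hx))

lemma spec_mul_le {m k l : ℕ} (M : Matrix (Fin m) (Fin k) ℝ) (N : Matrix (Fin k) (Fin l) ℝ) :
    spec (M * N) ≤ spec M * spec N := by
  apply spec_le
  intro x hx
  rw [← Matrix.mulVec_mulVec]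
  calc l2 (M.mulVec (N.mulVec x)) ≤ spec M * l2 (N.mulVec x) := l2_mulVec_le _ _
    _ ≤ spec M * spec N := by
        apply mul_le_mul_of_nonneg_left (le_spec N hx) (spec_nonneg M)

lemma spec_le_one_of_iso {m k : ℕ} {M : Matrix (Fin m) (Fin k) ℝ} (h : Mᵀ * M = 1) :
    spec M ≤ 1 := spec_le fun x hx => by rw [l2_mulVec_iso h]; exact hx

lemma spec_transpose_le_one_of_iso {m k : ℕ} {M : Matrix (Fin m) (Fin k) ℝ}
    (h : Mᵀ * M = 1) : spec Mᵀ ≤ 1 :=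
  spec_le fun x hx => (l2_transpose_mulVec_le h x).trans hx

-- sum reindexing
lemma sum_range_ite {κ : ℕ} {mm : ℕ} (h : κ ≤ mm) (f : ℕ → ℝ) :
    ∑ i ∈ Finset.range mm, (if i < κ then f i else 0) = ∑ i ∈ Finset.range κ, f i := by
  rw [← Finset.sum_subset (Finset.range_subset_range.2 h)
    (fun x _ hx => by rw [if_neg (by simpa using hx)])]
  exact Finset.sum_congr rfl fun x hx => if_pos (Finset.mem_range.1 hx)

lemma sum_fin_ite {κ mm : ℕ} (h : κ ≤ mm) (f : ℕ → ℝ) :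
    ∑ i : Fin mm, (if (i : ℕ) < κ then f i else 0) = ∑ i ∈ Finset.range κ, f i := by
  rw [Fin.sum_univ_eq_sum_range (fun j => if j < κ then f j else 0), sum_range_ite h]

-- diagonal-type matrix: operator bound
lemma l2_mulVec_diaglike_le {mm nn : ℕ} {M : Matrix (Fin mm) (Fin nn) ℝ} {τ : ℝ}
    (hτ : 0 ≤ τ) (hd : ∀ (i : Fin mm) (j : Fin nn), (i : ℕ) ≠ (j : ℕ) → M i j = 0)
    (hb : ∀ (i : Fin mm) (j : Fin nn), (i : ℕ) = (j : ℕ) → |M i j| ≤ τ)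
    (z : Fin nn → ℝ) : l2 (M.mulVec z) ≤ τ * l2 z := by
  apply l2_le_of_sq_le_sq hτ
  have key : ∀ i : Fin mm, (M.mulVec z i) ^ 2 ≤
      (if (i : ℕ) < nn then τ ^ 2 * (if h : (i : ℕ) < nn then z ⟨i, h⟩ ^ 2 else 0) else 0) := by
    intro i
    by_cases h : (i : ℕ) < nn
    · have : M.mulVec z i = M i ⟨i, h⟩ * z ⟨i, h⟩ := by
        rw [Matrix.mulVec, dotProduct]
        rw [Finset.sum_eq_single ⟨(i : ℕ), h⟩]
        · intro b _ hb'
          rw [hd i b (by simpa using fun hh => hb' (Fin.ext hh.symm)), zero_mul]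
        · intro hmem; exact absurd (Finset.mem_univ _) hmem
      rw [this, if_pos h, dif_pos h, mul_pow]
      have h3 := hb i ⟨i, h⟩ rfl
      have h4 : M i ⟨i, h⟩ ^ 2 ≤ τ ^ 2 := by
        nlinarith [abs_nonneg (M i ⟨i, h⟩), sq_abs (M i ⟨i, h⟩)]
      nlinarith [sq_nonneg (z ⟨i, h⟩)]
    · have : M.mulVec z i = 0 := by
        rw [Matrix.mulVec, dotProduct]
        apply Finset.sum_eq_zero
        intro j _
        rw [hd i j (by omega), zero_mul]
      rw [this, if_neg h]; norm_num
  calc ∑ i, (M.mulVec z i) ^ 2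
      ≤ ∑ i : Fin mm, (if (i : ℕ) < nn then τ ^ 2 * (if h : (i : ℕ) < nn then z ⟨i, h⟩ ^ 2 else 0) else 0) :=
        Finset.sum_le_sum fun i _ => key i
    _ = ∑ i ∈ Finset.range (min nn mm), (τ ^ 2 * (if h : i < nn then z ⟨i, h⟩ ^ 2 else 0)) := by
        rw [← sum_fin_ite (min_le_right nn mm) (fun j => τ ^ 2 * (if h : j < nn then z ⟨j, h⟩ ^ 2 else 0))]
        apply Finset.sum_congr rfl
        intro i _
        congr 1
        simp [Nat.lt_min, i.isLt]
    _ ≤ ∑ i ∈ Finset.range nn, (τ ^ 2 * (if h : i < nn then z ⟨i, h⟩ ^ 2 else 0)) := by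
        apply Finset.sum_le_sum_of_subset_of_nonneg
          (Finset.range_subset_range.2 (min_le_left nn mm))
        intro i _ _
        apply mul_nonneg (sq_nonneg τ)
        split_ifs <;> positivity
    _ = τ ^ 2 * ∑ j, z j ^ 2 := by
        rw [Finset.mul_sum]
        rw [← Fin.sum_univ_eq_sum_range (fun j => τ ^ 2 * (if h : j < nn then z ⟨j, h⟩ ^ 2 else 0))]
        exact Finset.sum_congr rfl fun j _ => by rw [dif_pos j.isLt]

lemma mulVec_diagonal' {k : ℕ} (d : Fin k → ℝ) (z : Fin k → ℝ) :
    (Matrix.diagonal d).mulVec z = fun i => d i * z i := by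
  funext i; simp [Matrix.mulVec_diagonal]

-- scaling trick: lower bound via diagonal with entries ≥ σ
lemma sigma_spec_le_spec_mul_diag {mm rr : ℕ} (C : Matrix (Fin mm) (Fin rr) ℝ)
    {d : Fin rr → ℝ} {σ : ℝ} (hσ : 0 ≤ σ) (hd : ∀ c, σ ≤ d c) :
    σ * spec C ≤ spec (C * Matrix.diagonal d) := by
  rcases eq_or_lt_of_le hσ with rfl | hσpos
  · simpa using spec_nonneg (C * Matrix.diagonal d)
  have key : ∀ x : Fin rr → ℝ, l2 x ≤ 1 → σ * l2 (C.mulVec x) ≤ spec (C * Matrix.diagonal d) := by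
    intro x hx
    set z : Fin rr → ℝ := fun c => σ * x c / d c with hz
    have hdpos : ∀ c, 0 < d c := fun c => lt_of_lt_of_le hσpos (hd c)
    have hl2z : l2 z ≤ 1 := by
      refine le_trans ?_ hx
      have : l2 z ≤ 1 * l2 x := by
        apply l2_le_of_sq_le_sq zero_le_one
        rw [one_pow, one_mul]
        apply Finset.sum_le_sum
        intro c _
        rw [hz]
        rw [div_pow, mul_pow]
        rw [div_le_iff₀ (pow_pos (hdpos c) 2)]
        have h1 : σ ^ 2 ≤ d c ^ 2 := by nlinarith [hd c]
        nlinarith [sq_nonneg (x c)]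
      simpa using this
    have hmv : (C * Matrix.diagonal d).mulVec z = C.mulVec (σ • x) := by
      rw [← Matrix.mulVec_mulVec, mulVec_diagonal']
      have hv : (fun j => d j * z j) = σ • x := by
        funext j
        show d j * (σ * x j / d j) = (σ • x) j
        rw [mul_comm]
        simp only [Pi.smul_apply, smul_eq_mul]
        exact div_mul_cancel₀ _ (hdpos j).ne'
      rw [hv]
    have := le_spec (C * Matrix.diagonal d) hl2z
    rw [hmv, Matrix.mulVec_smul, l2_smul, abs_of_nonneg hσ] at this
    exact this
  have h2 : spec C ≤ σ⁻¹ * spec (C * Matrix.diagonal d) := by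
    apply spec_le
    intro x hx
    rw [← mul_le_mul_iff_right₀ hσpos, ← mul_assoc, mul_inv_cancel₀ hσpos.ne', one_mul]
    exact key x hx
  calc σ * spec C ≤ σ * (σ⁻¹ * spec (C * Matrix.diagonal d)) := by
        apply mul_le_mul_of_nonneg_left h2 hσ
    _ = spec (C * Matrix.diagonal d) := by field_simp

-- the 0/1 diagonal selector
def sel (mm rr : ℕ) : Matrix (Fin mm) (Fin mm) ℝ :=
  Matrix.diagonal (fun i => if (i : ℕ) < rr then 1 else 0)

lemma IsSVD.transpose {m k : ℕ} {A : Matrix (Fin m) (Fin k) ℝ} {U S V}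
    (h : IsSVD A U S V) : IsSVD Aᵀ V Sᵀ U := by
  obtain ⟨hU, hV, hA, hd, hnn, hdesc⟩ := h
  refine ⟨hV, hU, ?_, ?_, fun i j => hnn j i, ?_⟩
  · rw [hA]; simp [Matrix.transpose_mul, Matrix.mul_assoc]
  · intro i j hij; exact hd j i (Ne.symm hij)
  · intro a b ham hak hbm hbk hab
    exact hdesc a b hak ham hbk hbm hab

section struct
variable {m n r : ℕ} (hrm : r ≤ m) (hrn : r ≤ n)
variable {U : Matrix (Fin m) (Fin m) ℝ} {V : Matrix (Fin n) (Fin n) ℝ}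
variable {Ur : Matrix (Fin m) (Fin r) ℝ}

lemma trunc_orth (hU : Uᵀ * U = 1)
    (hUr : ∀ i j, Ur i j = U i (Fin.castLE hrm j)) : Urᵀ * Ur = 1 := by
  ext c c'
  have h2 : (Uᵀ * U) (Fin.castLE hrm c) (Fin.castLE hrm c')
      = (1 : Matrix (Fin m) (Fin m) ℝ) (Fin.castLE hrm c) (Fin.castLE hrm c') := by rw [hU]
  simp only [Matrix.mul_apply, Matrix.transpose_apply] at h2 ⊢
  simp only [hUr]
  rw [h2]
  by_cases hcc : c = c'
  · simp [hcc, Matrix.one_apply]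
  · rw [Matrix.one_apply_ne (fun h => hcc ((Fin.castLE_injective hrm) h)),
      Matrix.one_apply_ne hcc]

lemma trunc_mul_trunc_t (hUr : ∀ i j, Ur i j = U i (Fin.castLE hrm j)) :
    Ur * Urᵀ = U * sel m r * Uᵀ := by
  ext i i'
  simp only [Matrix.mul_apply, Matrix.transpose_apply, hUr, sel]
  have hstep : ∀ j : Fin m, (∑ j', U i j' * Matrix.diagonal (fun t : Fin m => if (t : ℕ) < r then (1:ℝ) else 0) j' j) * U i' j
      = (if (j : ℕ) < r then (fun t => if ht : t < m then U i ⟨t, ht⟩ * U i' ⟨t, ht⟩ else 0) (j : ℕ) else 0) := by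
    intro j
    rw [← Matrix.mul_apply (M := U), Matrix.mul_diagonal]
    by_cases hj : (j : ℕ) < r
    · rw [if_pos hj, if_pos hj]
      simp only [dif_pos j.isLt, Fin.eta]
      ring
    · rw [if_neg hj, if_neg hj]
      ring
  calc ∑ j : Fin r, U i (Fin.castLE hrm j) * U i' (Fin.castLE hrm j)
      = ∑ j ∈ Finset.range r, (fun t => if ht : t < m then U i ⟨t, ht⟩ * U i' ⟨t, ht⟩ else 0) j := by
        rw [← Fin.sum_univ_eq_sum_range]
        apply Finset.sum_congr rfl
        intro c _
        rw [dif_pos (lt_of_lt_of_le c.isLt hrm)]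
        rfl
    _ = ∑ j : Fin m, (if (j : ℕ) < r then (fun t => if ht : t < m then U i ⟨t, ht⟩ * U i' ⟨t, ht⟩ else 0) (j : ℕ) else 0) :=
        (sum_fin_ite hrm (fun t => if ht : t < m then U i ⟨t, ht⟩ * U i' ⟨t, ht⟩ else 0)).symm
    _ = ∑ j : Fin m, (∑ j', U i j' * Matrix.diagonal (fun t : Fin m => if (t : ℕ) < r then (1:ℝ) else 0) j' j) * U i' j := by
        exact (Finset.sum_congr rfl fun j _ => (hstep j)).symm

end struct

section svdstruct
variable {m n r : ℕ} (hrm : r ≤ m) (hrn : r ≤ n)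
variable {Ah : Matrix (Fin m) (Fin n) ℝ}
variable {Uh : Matrix (Fin m) (Fin m) ℝ} {Sh : Matrix (Fin m) (Fin n) ℝ}
  {Vh : Matrix (Fin n) (Fin n) ℝ}
variable {Uhr : Matrix (Fin m) (Fin r) ℝ} {Vhr : Matrix (Fin n) (Fin r) ℝ}

/-- Ah * Vhr = Uhr * Σ̂₁ -/
lemma svd_mul_trunc (hSVD : IsSVD Ah Uh Sh Vh)
    (hUhr : ∀ i j, Uhr i j = Uh i (Fin.castLE hrm j))
    (hVhr : ∀ i j, Vhr i j = Vh i (Fin.castLE hrn j)) :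
    Ah * Vhr = Uhr * Matrix.diagonal (fun c : Fin r => Sh (Fin.castLE hrm c) (Fin.castLE hrn c)) := by
  obtain ⟨hU, hV, hA, hd, -, -⟩ := hSVD
  ext i c
  have lhs_eq : (Ah * Vhr) i c = (Uh * Sh) i (Fin.castLE hrn c) := by
    have : Ah * Vh = Uh * Sh := by
      rw [hA, Matrix.mul_assoc, Matrix.mul_assoc, hV, Matrix.mul_one]
    calc (Ah * Vhr) i c = ∑ j, Ah i j * Vh j (Fin.castLE hrn c) := by
          simp only [Matrix.mul_apply, hVhr]
      _ = (Ah * Vh) i (Fin.castLE hrn c) := by rw [Matrix.mul_apply]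
      _ = (Uh * Sh) i (Fin.castLE hrn c) := by rw [this]
  rw [lhs_eq, Matrix.mul_diagonal, hUhr, Matrix.mul_apply]
  rw [Finset.sum_eq_single (Fin.castLE hrm c)]
  · intro t _ ht
    rw [hd t (Fin.castLE hrn c) (by simpa using fun hh => ht (Fin.ext hh)), mul_zero]
  · intro hmem; exact absurd (Finset.mem_univ _) hmem

end svdstruct

lemma one_sub_sel (mm rr : ℕ) :
    (1 : Matrix (Fin mm) (Fin mm) ℝ) - sel mm rr
      = Matrix.diagonal (fun i : Fin mm => if (i : ℕ) < rr then (0:ℝ) else 1) := by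
  ext i j
  by_cases hij : i = j
  · subst hij
    by_cases h : (i : ℕ) < rr <;>
      simp [sel, Matrix.diagonal_apply_eq, Matrix.sub_apply, h]
  · simp [sel, Matrix.diagonal_apply_ne _ hij, Matrix.sub_apply, Matrix.one_apply_ne hij]

lemma one_sub_sel_mul_apply {m n r : ℕ} (S : Matrix (Fin m) (Fin n) ℝ) (i : Fin m) (j : Fin n) :
    ((1 - sel m r) * S : Matrix (Fin m) (Fin n) ℝ) i j = (if (i : ℕ) < r then 0 else 1) * S i j := by
  rw [one_sub_sel, Matrix.diagonal_mul]

section a2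
variable {m n r : ℕ}
variable {A : Matrix (Fin m) (Fin n) ℝ}
variable {U : Matrix (Fin m) (Fin m) ℝ} {S : Matrix (Fin m) (Fin n) ℝ}
  {V : Matrix (Fin n) (Fin n) ℝ}
variable {Ur : Matrix (Fin m) (Fin r) ℝ} {Vr : Matrix (Fin n) (Fin r) ℝ}

lemma sel_swap (hS : ∀ (i : Fin m) (j : Fin n), (i : ℕ) ≠ (j : ℕ) → S i j = 0) :
    sel m r * S = S * sel n r := by
  ext i j
  rw [sel, sel, Matrix.diagonal_mul, Matrix.mul_diagonal]
  by_cases hij : (i : ℕ) = (j : ℕ)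
  · rw [hij]; ring
  · rw [hS i j hij]; ring

lemma mul_sub_one_sel (hS : ∀ (i : Fin m) (j : Fin n), (i : ℕ) ≠ (j : ℕ) → S i j = 0) :
    S * (1 - sel n r) = (1 - sel m r) * S := by
  rw [Matrix.mul_sub, Matrix.sub_mul, Matrix.mul_one, Matrix.one_mul, sel_swap hS]

-- Q₂ * A = A₂
lemma q2_mul (hSVD : IsSVD A U S V)
    (hUrUrT : Ur * Urᵀ = U * sel m r * Uᵀ) :
    (1 - Ur * Urᵀ) * A = U * ((1 - sel m r) * S) * Vᵀ := by
  obtain ⟨hU, hV, hA, hd, -, -⟩ := hSVD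
  rw [Matrix.sub_mul, Matrix.one_mul, hUrUrT, hA]
  calc U * S * Vᵀ - U * sel m r * Uᵀ * (U * S * Vᵀ)
      = U * S * Vᵀ - U * sel m r * (Uᵀ * U) * S * Vᵀ := by
        simp only [Matrix.mul_assoc]
    _ = U * S * Vᵀ - U * (sel m r * S) * Vᵀ := by
        rw [hU]; simp only [Matrix.mul_assoc, Matrix.one_mul]
    _ = U * ((1 - sel m r) * S) * Vᵀ := by
        rw [Matrix.sub_mul, Matrix.one_mul, Matrix.mul_sub, Matrix.sub_mul]

-- A * P₂ = A₂
lemma mul_p2 (hSVD : IsSVD A U S V)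
    (hVrVrT : Vr * Vrᵀ = V * sel n r * Vᵀ) :
    A * (1 - Vr * Vrᵀ) = U * ((1 - sel m r) * S) * Vᵀ := by
  obtain ⟨hU, hV, hA, hd, -, -⟩ := hSVD
  rw [Matrix.mul_sub, Matrix.mul_one, hVrVrT, hA]
  calc U * S * Vᵀ - U * S * Vᵀ * (V * sel n r * Vᵀ)
      = U * S * Vᵀ - U * S * (Vᵀ * V) * sel n r * Vᵀ := by simp only [Matrix.mul_assoc]
    _ = U * S * Vᵀ - U * (S * sel n r) * Vᵀ := by
        rw [hV]; simp only [Matrix.mul_assoc, Matrix.one_mul]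
    _ = U * (S * (1 - sel n r)) * Vᵀ := by
        rw [Matrix.mul_sub, Matrix.mul_one, Matrix.mul_sub, Matrix.sub_mul]
    _ = U * ((1 - sel m r) * S) * Vᵀ := by rw [mul_sub_one_sel hd]

-- projector lemmas
lemma proj_mul_proj {E : Matrix (Fin m) (Fin r) ℝ} (hE : Eᵀ * E = 1) :
    E * Eᵀ * (E * Eᵀ) = E * Eᵀ := by
  calc E * Eᵀ * (E * Eᵀ) = E * (Eᵀ * E) * Eᵀ := by simp only [Matrix.mul_assoc]
    _ = E * Eᵀ := by rw [hE, Matrix.mul_one]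

lemma proj_idem {E : Matrix (Fin m) (Fin r) ℝ} (hE : Eᵀ * E = 1) :
    (1 - E * Eᵀ) * (1 - E * Eᵀ) = 1 - E * Eᵀ := by
  rw [Matrix.sub_mul, Matrix.one_mul, Matrix.mul_sub, Matrix.mul_one, proj_mul_proj hE,
    sub_self, sub_zero]

lemma proj_transpose {E : Matrix (Fin m) (Fin r) ℝ} :
    ((1 : Matrix (Fin m) (Fin m) ℝ) - E * Eᵀ)ᵀ = 1 - E * Eᵀ := by
  rw [Matrix.transpose_sub, Matrix.transpose_one, Matrix.transpose_mul,
    Matrix.transpose_transpose]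

lemma l2_proj_compl_le {E : Matrix (Fin m) (Fin r) ℝ} (hE : Eᵀ * E = 1)
    (x : Fin m → ℝ) : l2 ((1 - E * Eᵀ).mulVec x) ≤ l2 x := by
  have hPT : (E * Eᵀ)ᵀ = E * Eᵀ := by rw [Matrix.transpose_mul, Matrix.transpose_transpose]
  have h2 : ((E * Eᵀ).mulVec x) ⬝ᵥ ((E * Eᵀ).mulVec x) = x ⬝ᵥ ((E * Eᵀ).mulVec x) := by
    rw [mulVec_dot, hPT, Matrix.mulVec_mulVec, proj_mul_proj hE]
  have h3 : (Eᵀ.mulVec x) ⬝ᵥ (Eᵀ.mulVec x) = x ⬝ᵥ ((E * Eᵀ).mulVec x) := by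
    rw [mulVec_dot, Matrix.transpose_transpose, Matrix.mulVec_mulVec]
  have hcomm : ((E * Eᵀ).mulVec x) ⬝ᵥ x = x ⬝ᵥ ((E * Eᵀ).mulVec x) :=
    dotProduct_comm _ _
  have h1 : (1 - E * Eᵀ).mulVec x = x - (E * Eᵀ).mulVec x := by
    rw [Matrix.sub_mulVec, Matrix.one_mulVec]
  have key : l2 ((1 - E * Eᵀ).mulVec x) ^ 2 + l2 (Eᵀ.mulVec x) ^ 2 = l2 x ^ 2 := by
    rw [l2_sq_eq_dot, l2_sq_eq_dot, l2_sq_eq_dot, h1, h3]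
    simp only [sub_dotProduct, dotProduct_sub]
    linarith [h2, hcomm]
  nlinarith [l2_nonneg ((1 - E * Eᵀ).mulVec x), l2_nonneg x, sq_nonneg (l2 (Eᵀ.mulVec x))]

lemma spec_proj_compl_le_one {E : Matrix (Fin m) (Fin r) ℝ} (hE : Eᵀ * E = 1) :
    spec (1 - E * Eᵀ) ≤ 1 :=
  spec_le fun x hx => (l2_proj_compl_le hE x).trans hx

-- spec (A₂) ≤ τ
set_option maxHeartbeats 1000000 in
lemma spec_a2_le (hrm' : r < m) (hrn' : r < n) (hSVD : IsSVD A U S V) :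
    spec (U * ((1 - sel m r) * S) * Vᵀ) ≤ S ⟨r, hrm'⟩ ⟨r, hrn'⟩ := by
  obtain ⟨hU, hV, hA, hd, hnn, hdesc⟩ := hSVD
  have hτ : 0 ≤ S ⟨r, hrm'⟩ ⟨r, hrn'⟩ := hnn _ _
  have hVt : (Vᵀ)ᵀ * Vᵀ = 1 := by
    rw [Matrix.transpose_transpose]; exact mul_eq_one_comm.mp hV
  have hdd : ∀ (i : Fin m) (j : Fin n), (i : ℕ) ≠ (j : ℕ) →
      ((1 - sel m r) * S : Matrix (Fin m) (Fin n) ℝ) i j = 0 := by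
    intro i j hij
    rw [one_sub_sel_mul_apply, hd i j hij, mul_zero]
  have hbb : ∀ (i : Fin m) (j : Fin n), (i : ℕ) = (j : ℕ) →
      |((1 - sel m r) * S : Matrix (Fin m) (Fin n) ℝ) i j| ≤ S ⟨r, hrm'⟩ ⟨r, hrn'⟩ := by
    rintro ⟨iv, him⟩ ⟨jv, hjn⟩ hij
    simp only at hij
    subst hij
    rw [one_sub_sel_mul_apply]
    by_cases h : iv < r
    · rw [if_pos h, zero_mul, abs_zero]; exact hτ
    · rw [if_neg h, one_mul, abs_of_nonneg (hnn _ _)]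
      exact hdesc r iv hrm' hrn' him hjn (le_of_not_gt h)
  apply spec_le
  intro x hx
  have hmv : (U * ((1 - sel m r) * S) * Vᵀ).mulVec x
      = U.mulVec (((1 - sel m r) * S).mulVec (Vᵀ.mulVec x)) := by
    rw [Matrix.mulVec_mulVec, Matrix.mulVec_mulVec]
  rw [hmv, l2_mulVec_iso hU]
  have step1 := l2_mulVec_diaglike_le (M := (1 - sel m r) * S) hτ hdd hbb (Vᵀ.mulVec x)
  refine step1.trans ?_
  rw [l2_mulVec_iso hVt]
  nlinarith [hτ, hx, l2_nonneg x]

set_option maxHeartbeats 1000000 in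
lemma spec_a2t_le (hrm' : r < m) (hrn' : r < n) (hSVD : IsSVD A U S V) :
    spec ((U * ((1 - sel m r) * S) * Vᵀ)ᵀ) ≤ S ⟨r, hrm'⟩ ⟨r, hrn'⟩ := by
  obtain ⟨hU, hV, hA, hd, hnn, hdesc⟩ := hSVD
  have hτ : 0 ≤ S ⟨r, hrm'⟩ ⟨r, hrn'⟩ := hnn _ _
  have hdd : ∀ (j : Fin n) (i : Fin m), (j : ℕ) ≠ (i : ℕ) →
      (((1 - sel m r) * S : Matrix (Fin m) (Fin n) ℝ)ᵀ) j i = 0 := by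
    intro j i hij
    rw [Matrix.transpose_apply, one_sub_sel_mul_apply, hd i j (Ne.symm hij), mul_zero]
  have hbb : ∀ (j : Fin n) (i : Fin m), (j : ℕ) = (i : ℕ) →
      |(((1 - sel m r) * S : Matrix (Fin m) (Fin n) ℝ)ᵀ) j i| ≤ S ⟨r, hrm'⟩ ⟨r, hrn'⟩ := by
    rintro ⟨jv, hjn⟩ ⟨iv, him⟩ hij
    simp only at hij
    subst hij
    rw [Matrix.transpose_apply, one_sub_sel_mul_apply]
    by_cases h : jv < r
    · rw [if_pos h, zero_mul, abs_zero]; exact hτ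
    · rw [if_neg h, one_mul, abs_of_nonneg (hnn _ _)]
      exact hdesc r jv hrm' hrn' him hjn (le_of_not_gt h)
  apply spec_le
  intro x hx
  have hmv : ((U * ((1 - sel m r) * S) * Vᵀ)ᵀ).mulVec x
      = V.mulVec ((((1 - sel m r) * S)ᵀ).mulVec (Uᵀ.mulVec x)) := by
    rw [Matrix.transpose_mul, Matrix.transpose_mul, Matrix.transpose_transpose,
      Matrix.mulVec_mulVec, Matrix.mulVec_mulVec, Matrix.mul_assoc]
  rw [hmv, l2_mulVec_iso hV]
  have step1 := l2_mulVec_diaglike_le (M := ((1 - sel m r) * S)ᵀ) hτ hdd hbb (Uᵀ.mulVec x)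
  refine step1.trans ?_
  have step2 := l2_transpose_mulVec_le hU x
  nlinarith [hτ, hx, l2_nonneg x, l2_nonneg (Uᵀ.mulVec x)]

end a2

lemma spec_sub_comm {m k : ℕ} (M N : Matrix (Fin m) (Fin k) ℝ) :
    spec (M - N) = spec (N - M) := by
  have h : ∀ (P Q : Matrix (Fin m) (Fin k) ℝ), spec (P - Q) ≤ spec (Q - P) := by
    intro P Q
    apply spec_le
    intro x hx
    have heq : (P - Q).mulVec x = -((Q - P).mulVec x) := by
      rw [← Matrix.neg_mulVec]
      congr 1
      abel
    rw [heq, l2_neg]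
    exact le_spec _ hx
  exact le_antisymm (h M N) (h N M)

section cf
variable {m n : ℕ} {A Ah : Matrix (Fin m) (Fin n) ℝ}
variable {U : Matrix (Fin m) (Fin m) ℝ} {S : Matrix (Fin m) (Fin n) ℝ}
  {V : Matrix (Fin n) (Fin n) ℝ}

/-- extension by zero as a linear map -/
def extLin (j n : ℕ) (h : j ≤ n) : (Fin j → ℝ) →ₗ[ℝ] (Fin n → ℝ) where
  toFun a := fun t => if ht : (t : ℕ) < j then a ⟨t, ht⟩ else 0
  map_add' a b := by
    funext t
    by_cases ht : (t : ℕ) < j <;> simp [ht]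
  map_smul' c a := by
    funext t
    by_cases ht : (t : ℕ) < j <;> simp [ht]

lemma l2_ext (j n : ℕ) (h : j ≤ n) (a : Fin j → ℝ) :
    l2 (extLin j n h a) = l2 a := by
  have : ∑ t : Fin n, (extLin j n h a t) ^ 2 = ∑ c : Fin j, a c ^ 2 := by
    have h1 : ∀ t : Fin n, (extLin j n h a t) ^ 2
        = (if (t : ℕ) < j then (fun s => if hs : s < j then a ⟨s, hs⟩ ^ 2 else 0) (t : ℕ) else 0) := by
      intro t
      by_cases ht : (t : ℕ) < j
      · simp [extLin, ht]
      · simp [extLin, ht]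
    rw [Finset.sum_congr rfl fun t _ => h1 t,
      sum_fin_ite h (fun s => if hs : s < j then a ⟨s, hs⟩ ^ 2 else 0),
      ← Fin.sum_univ_eq_sum_range (fun s => if hs : s < j then a ⟨s, hs⟩ ^ 2 else 0)]
    exact Finset.sum_congr rfl fun c _ => by rw [dif_pos c.isLt]
  rw [l2, l2, this]

lemma singVal_bddAbove {j : ℕ} (hj : 1 ≤ j) :
    BddAbove {c : ℝ | ∃ V : Submodule ℝ (Fin n → ℝ), Module.finrank ℝ V = j ∧
      ∀ x ∈ V, c * l2 x ≤ l2 (A.mulVec x)} := by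
  refine ⟨spec A, ?_⟩
  rintro c ⟨W, hW, hprop⟩
  have hne : W ≠ ⊥ := by
    intro hbot
    rw [hbot] at hW
    rw [finrank_bot] at hW
    omega
  obtain ⟨x, hxW, hx0⟩ := Submodule.exists_mem_ne_zero_of_ne_bot hne
  have hl2 : 0 < l2 x := lt_of_le_of_ne (l2_nonneg x) (fun h => hx0 (l2_eq_zero.mp h.symm))
  have h1 := hprop x hxW
  have h2 := l2_mulVec_le A x
  nlinarith

/-- Easy direction of Courant–Fischer. -/
lemma cf_easy (hSVD : IsSVD A U S V) {j : ℕ} (hj1 : 1 ≤ j) (hjm : j ≤ m) (hjn : j ≤ n) :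
    S ⟨j-1, by omega⟩ ⟨j-1, by omega⟩ ≤ singVal A j := by
  obtain ⟨hU, hV, hA, hd, hnn, hdesc⟩ := hSVD
  set σ := S ⟨j-1, by omega⟩ ⟨j-1, by omega⟩ with hσdef
  have hσ : 0 ≤ σ := hnn _ _
  set T : (Fin j → ℝ) →ₗ[ℝ] (Fin n → ℝ) := (Matrix.mulVecLin V).comp (extLin j n hjn) with hT
  have hinj : Function.Injective T := by
    intro a b hab
    have h1 : l2 (T a - T b) = 0 := by rw [hab]; simp [l2_eq_zero]
    have h2 : T a - T b = T (a - b) := (map_sub T a b).symm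
    rw [h2] at h1
    have h3 : T (a - b) = V.mulVec (extLin j n hjn (a - b)) := by
      simp [hT, Matrix.mulVecLin_apply]
    rw [h3, l2_mulVec_iso hV, l2_ext] at h1
    have h4 : a - b = 0 := by
      have := l2_eq_zero.mp h1
      -- extLin (a-b) = 0 implies a-b=0? no: h1 is l2 (a-b) = 0 directly
      exact this
    exact sub_eq_zero.mp h4
  have hrank : Module.finrank ℝ (LinearMap.range T) = j := by
    have := LinearMap.finrank_range_add_finrank_ker T
    rw [LinearMap.ker_eq_bot.mpr hinj, finrank_bot] at this
    simpa using this
  apply le_csSup (singVal_bddAbove hj1)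
  refine ⟨LinearMap.range T, hrank, ?_⟩
  rintro x ⟨a, rfl⟩
  have hx : T a = V.mulVec (extLin j n hjn a) := by simp [hT, Matrix.mulVecLin_apply]
  rw [hx, l2_mulVec_iso hV, l2_ext]
  have hAx : A.mulVec (V.mulVec (extLin j n hjn a)) = U.mulVec (S.mulVec (extLin j n hjn a)) := by
    rw [Matrix.mulVec_mulVec, Matrix.mulVec_mulVec]
    congr 1
    rw [hA, Matrix.mul_assoc, hV, Matrix.mul_one]  -- (U*S*Vᵀ)*V: assoc
  rw [hAx, l2_mulVec_iso hU]
  -- now: σ * l2 a ≤ l2 (S.mulVec (extLin j n hjn a))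
  have hsq : σ ^ 2 * ∑ c, a c ^ 2 ≤ ∑ i, (S.mulVec (extLin j n hjn a) i) ^ 2 := by
    have per : ∀ i : Fin m,
        (if (i : ℕ) < j then (fun s => σ ^ 2 * (if hs : s < j then a ⟨s, hs⟩ ^ 2 else 0)) (i : ℕ) else 0)
        ≤ (S.mulVec (extLin j n hjn a) i) ^ 2 := by
      intro i
      by_cases h : (i : ℕ) < j
      · rw [if_pos h]
        have hin : (i : ℕ) < n := lt_of_lt_of_le h hjn
        have hentry : S.mulVec (extLin j n hjn a) i = S i ⟨(i : ℕ), hin⟩ * a ⟨(i : ℕ), h⟩ := by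
          rw [Matrix.mulVec, dotProduct]
          rw [Finset.sum_eq_single (⟨(i : ℕ), hin⟩ : Fin n)]
          · congr 1
            simp [extLin, h]
          · intro t _ ht
            rw [hd i t (by simpa using fun hh => ht (Fin.ext hh.symm)), zero_mul]
          · intro hmem; exact absurd (Finset.mem_univ _) hmem
        rw [hentry]
        simp only [dif_pos h]
        have hbig : σ ≤ S i ⟨(i : ℕ), hin⟩ := by
          have : S i ⟨(i : ℕ), hin⟩ = S ⟨(i : ℕ), i.isLt⟩ ⟨(i : ℕ), hin⟩ := by simp [Fin.eta]
          rw [this, hσdef]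
          exact hdesc (i : ℕ) (j-1) i.isLt hin (by omega) (by omega) (by omega)
        rw [mul_pow]
        have h1 : σ ^ 2 ≤ S i ⟨(i : ℕ), hin⟩ ^ 2 := by nlinarith
        nlinarith [sq_nonneg (a ⟨(i : ℕ), h⟩)]
      · rw [if_neg h]
        exact sq_nonneg _
    calc σ ^ 2 * ∑ c, a c ^ 2
        = ∑ i ∈ Finset.range j, (fun s => σ ^ 2 * (if hs : s < j then a ⟨s, hs⟩ ^ 2 else 0)) i := by
          rw [Finset.mul_sum, ← Fin.sum_univ_eq_sum_range
            (fun s => σ ^ 2 * (if hs : s < j then a ⟨s, hs⟩ ^ 2 else 0))]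
          exact Finset.sum_congr rfl fun c _ => by rw [dif_pos c.isLt]
      _ = ∑ i : Fin m, (if (i : ℕ) < j then (fun s => σ ^ 2 * (if hs : s < j then a ⟨s, hs⟩ ^ 2 else 0)) (i : ℕ) else 0) :=
          (sum_fin_ite hjm (fun s => σ ^ 2 * (if hs : s < j then a ⟨s, hs⟩ ^ 2 else 0))).symm
      _ ≤ ∑ i, (S.mulVec (extLin j n hjn a) i) ^ 2 := Finset.sum_le_sum fun i _ => per i
  -- conclude via sqrt monotonicity
  have h2 : (σ * l2 a) ^ 2 ≤ l2 (S.mulVec (extLin j n hjn a)) ^ 2 := by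
    rw [mul_pow, l2_sq, l2_sq]
    exact hsq
  nlinarith [l2_nonneg (S.mulVec (extLin j n hjn a)), mul_nonneg hσ (l2_nonneg a)]

/-- Hard direction of Courant–Fischer. -/
lemma cf_hard (hSVD : IsSVD A U S V) {j : ℕ} (hj1 : 1 ≤ j) (hjm : j ≤ m) (hjn : j ≤ n) :
    singVal A j ≤ S ⟨j-1, by omega⟩ ⟨j-1, by omega⟩ := by
  obtain ⟨hU, hV, hA, hd, hnn, hdesc⟩ := hSVD
  set σ := S ⟨j-1, by omega⟩ ⟨j-1, by omega⟩ with hσdef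
  have hσ : 0 ≤ σ := hnn _ _
  apply Real.sSup_le _ hσ
  rintro c ⟨W, hW, hprop⟩
  -- intersect W with kernel of first (j-1) coordinates of Vᵀ x
  set T : (Fin n → ℝ) →ₗ[ℝ] (Fin (j-1) → ℝ) :=
    (LinearMap.funLeft ℝ ℝ (Fin.castLE (by omega : j - 1 ≤ n))).comp (Matrix.mulVecLin Vᵀ) with hT
  set K := LinearMap.ker T with hK
  have hKrank : n ≤ Module.finrank ℝ K + (j - 1) := by
    have h1 := LinearMap.finrank_range_add_finrank_ker T
    rw [← hK] at h1
    have h2 : Module.finrank ℝ (LinearMap.range T) ≤ j - 1 := by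
      have := Submodule.finrank_le (LinearMap.range T)
      simpa using this
    have h3 : Module.finrank ℝ (Fin n → ℝ) = n := by simp
    omega
  have hinter : W ⊓ K ≠ ⊥ := by
    intro hbot
    have h4 := Submodule.finrank_sup_add_finrank_inf_eq W K
    rw [hbot, finrank_bot] at h4
    have h5 : Module.finrank ℝ ↥(W ⊔ K) ≤ n := by
      have := Submodule.finrank_le (W ⊔ K)
      simpa using this
    omega
  obtain ⟨x, hxWK, hx0⟩ := Submodule.exists_mem_ne_zero_of_ne_bot hinter
  have hxW : x ∈ W := hxWK.1
  have hxK : x ∈ K := hxWK.2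
  have hl2 : 0 < l2 x := lt_of_le_of_ne (l2_nonneg x) (fun h => hx0 (l2_eq_zero.mp h.symm))
  -- y := Vᵀ x vanishes on first j-1 coordinates
  set y := Vᵀ.mulVec x with hy
  have hyzero : ∀ t : Fin n, (t : ℕ) < j - 1 → y t = 0 := by
    intro t ht
    have h6 : T x = 0 := hxK
    have h7 := congrFun h6 ⟨(t : ℕ), ht⟩
    have h8 : y t = (Vᵀ.mulVec x) t := by rw [hy]
    rw [h8]
    simpa [hT, LinearMap.funLeft, Matrix.mulVecLin_apply, Matrix.mulVec_transpose,
      Fin.castLE, Fin.eta] using h7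
  -- l2 (A x) ≤ σ l2 x
  have hAx : A.mulVec x = U.mulVec (S.mulVec y) := by
    rw [hy, Matrix.mulVec_mulVec, Matrix.mulVec_mulVec, hA]
  have hSy : S.mulVec y = ((1 - sel m (j-1)) * S).mulVec y := by
    have hfix : (1 - sel n (j-1)).mulVec y = y := by
      funext t
      have : ((1 - sel n (j-1)) : Matrix (Fin n) (Fin n) ℝ).mulVec y t
          = (if (t : ℕ) < j - 1 then 0 else 1) * y t := by
        rw [one_sub_sel, Matrix.mulVec_diagonal]
      rw [this]
      by_cases ht : (t : ℕ) < j - 1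
      · rw [hyzero t ht]; ring
      · rw [if_neg ht, one_mul]
    conv_lhs => rw [← hfix]
    rw [Matrix.mulVec_mulVec, mul_sub_one_sel hd]
  have hVt : (Vᵀ)ᵀ * Vᵀ = 1 := by
    rw [Matrix.transpose_transpose]; exact mul_eq_one_comm.mp hV
  have hdd : ∀ (i : Fin m) (t : Fin n), (i : ℕ) ≠ (t : ℕ) →
      ((1 - sel m (j-1)) * S : Matrix (Fin m) (Fin n) ℝ) i t = 0 := by
    intro i t hit
    rw [one_sub_sel_mul_apply, hd i t hit, mul_zero]
  have hbb : ∀ (i : Fin m) (t : Fin n), (i : ℕ) = (t : ℕ) →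
      |((1 - sel m (j-1)) * S : Matrix (Fin m) (Fin n) ℝ) i t| ≤ σ := by
    rintro ⟨iv, him⟩ ⟨tv, htn⟩ hit
    simp only at hit
    subst hit
    rw [one_sub_sel_mul_apply]
    by_cases h : iv < j - 1
    · rw [if_pos h, zero_mul, abs_zero]; exact hσ
    · rw [if_neg h, one_mul, abs_of_nonneg (hnn _ _), hσdef]
      exact hdesc (j-1) iv (by omega) (by omega) him htn (by omega)
  have hAxle : l2 (A.mulVec x) ≤ σ * l2 x := by
    rw [hAx, l2_mulVec_iso hU, hSy]
    have := l2_mulVec_diaglike_le (M := (1 - sel m (j-1)) * S) hσ hdd hbb y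
    rwa [hy, l2_mulVec_iso hVt] at this
  have := hprop x hxW
  nlinarith

/-- Weyl-type inequality. -/
lemma weyl {j : ℕ} (hj1 : 1 ≤ j)
    (h0 : 0 ≤ singVal Ah j) :
    singVal A j ≤ singVal Ah j + spec (A - Ah) := by
  have hδ : 0 ≤ spec (A - Ah) := spec_nonneg _
  apply Real.sSup_le _ (by linarith)
  rintro c ⟨W, hW, hprop⟩
  have hmem : c - spec (A - Ah) ∈ {c : ℝ | ∃ V : Submodule ℝ (Fin n → ℝ),
      Module.finrank ℝ V = j ∧ ∀ x ∈ V, c * l2 x ≤ l2 (Ah.mulVec x)} := by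
    refine ⟨W, hW, ?_⟩
    intro x hx
    have h1 := hprop x hx
    have h2 : l2 (A.mulVec x) ≤ l2 (Ah.mulVec x) + l2 ((A - Ah).mulVec x) := by
      have hAA : A = Ah + (A - Ah) := by abel
      calc l2 (A.mulVec x) = l2 ((Ah + (A - Ah)).mulVec x) := by rw [← hAA]
        _ = l2 (Ah.mulVec x + (A - Ah).mulVec x) := by rw [Matrix.add_mulVec]
        _ ≤ l2 (Ah.mulVec x) + l2 ((A - Ah).mulVec x) := l2_add_le _ _
    have h3 : l2 ((A - Ah).mulVec x) ≤ spec (A - Ah) * l2 x := l2_mulVec_le _ _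
    have h4 : 0 ≤ l2 x := l2_nonneg x
    nlinarith
  have h10 : c - spec (A - Ah) ≤ singVal Ah j := le_csSup (singVal_bddAbove (A := Ah) hj1) hmem
  linarith
end cf

theorem IsSVD.transpose' {m k : ℕ} {A : Matrix (Fin m) (Fin k) ℝ} {U S V}
    (h : IsSVD A U S V) : IsSVD Aᵀ V Sᵀ U := by
  obtain ⟨hU, hV, hA, hd, hnn, hdesc⟩ := h
  refine ⟨hV, hU, ?_, ?_, fun i j => hnn j i, ?_⟩
  · rw [hA]; simp [Matrix.transpose_mul, Matrix.mul_assoc]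
  · intro i j hij; exact hd j i (Ne.symm hij)
  · intro a b ham hak hbm hbk hab
    exact hdesc a b hak ham hbk hbm hab

/-- Core Wedin-type inequality for left singular subspaces. -/
theorem wedin_core {m n r : ℕ} (hr1 : 1 ≤ r) (hrm : r < m) (hrn : r < n)
    {A Ah : Matrix (Fin m) (Fin n) ℝ}
    {U : Matrix (Fin m) (Fin m) ℝ} {S : Matrix (Fin m) (Fin n) ℝ}
    {V : Matrix (Fin n) (Fin n) ℝ}
    {Uh : Matrix (Fin m) (Fin m) ℝ} {Sh : Matrix (Fin m) (Fin n) ℝ}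
    {Vh : Matrix (Fin n) (Fin n) ℝ}
    (hA : IsSVD A U S V) (hAh : IsSVD Ah Uh Sh Vh)
    {Ur Uhr : Matrix (Fin m) (Fin r) ℝ}
    (hUr : ∀ i j, Ur i j = U i (Fin.castLE hrm.le j))
    (hUhr : ∀ i j, Uhr i j = Uh i (Fin.castLE hrm.le j)) :
    (Sh ⟨r-1, by omega⟩ ⟨r-1, by omega⟩ - S ⟨r, hrm⟩ ⟨r, hrn⟩) *
      spec ((1 - Ur * Urᵀ) * (Uhr * Uhrᵀ)) ≤ spec (A - Ah) := by
  obtain ⟨hAU, hAV, hAeq, hAd, hAnn, hAdesc⟩ := hA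
  obtain ⟨hhU, hhV, hheq, hhd, hhnn, hhdesc⟩ := hAh
  set δ := spec (A - Ah) with hδdef
  have hδ : 0 ≤ δ := spec_nonneg _
  set τ := S ⟨r, hrm⟩ ⟨r, hrn⟩ with hτdef
  set σh := Sh ⟨r-1, by omega⟩ ⟨r-1, by omega⟩ with hσhdef
  have hτ0 : 0 ≤ τ := hAnn _ _
  have hσh0 : 0 ≤ σh := hhnn _ _
  -- truncations of V and Vh
  set Vt : Matrix (Fin n) (Fin r) ℝ := Matrix.of fun i j => V i (Fin.castLE hrn.le j) with hVt
  set Vht : Matrix (Fin n) (Fin r) ℝ := Matrix.of fun i j => Vh i (Fin.castLE hrn.le j) with hVht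
  have hVtr : ∀ i j, Vt i j = V i (Fin.castLE hrn.le j) := fun i j => rfl
  have hVhtr : ∀ i j, Vht i j = Vh i (Fin.castLE hrn.le j) := fun i j => rfl
  have hUrO : Urᵀ * Ur = 1 := trunc_orth hrm.le hAU hUr
  have hUhrO : Uhrᵀ * Uhr = 1 := trunc_orth hrm.le hhU hUhr
  have hVtO : Vtᵀ * Vt = 1 := trunc_orth hrn.le hAV hVtr
  have hVhtO : Vhtᵀ * Vht = 1 := trunc_orth hrn.le hhV hVhtr
  set Q2 := (1 : Matrix (Fin m) (Fin m) ℝ) - Ur * Urᵀ with hQ2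
  set P2 := (1 : Matrix (Fin n) (Fin n) ℝ) - Vt * Vtᵀ with hP2
  set A2 := U * ((1 - sel m r) * S) * Vᵀ with hA2
  have e1 : Q2 * A = A2 := q2_mul ⟨hAU, hAV, hAeq, hAd, hAnn, hAdesc⟩ (trunc_mul_trunc_t hrm.le hUr)
  have e2 : A * P2 = A2 := mul_p2 ⟨hAU, hAV, hAeq, hAd, hAnn, hAdesc⟩ (trunc_mul_trunc_t hrn.le hVtr)
  set Sig1 := Matrix.diagonal (fun c : Fin r => Sh (Fin.castLE hrm.le c) (Fin.castLE hrn.le c)) with hSig1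
  have e3 : Ah * Vht = Uhr * Sig1 :=
    svd_mul_trunc hrm.le hrn.le ⟨hhU, hhV, hheq, hhd, hhnn, hhdesc⟩ hUhr hVhtr
  have e4 : Ahᵀ * Uhr = Vht * Sig1 := by
    have h := svd_mul_trunc hrn.le hrm.le
      (IsSVD.transpose' ⟨hhU, hhV, hheq, hhd, hhnn, hhdesc⟩) hVhtr hUhr
    have hdiag : Matrix.diagonal (fun c : Fin r => Shᵀ (Fin.castLE hrn.le c) (Fin.castLE hrm.le c)) = Sig1 := by
      rw [hSig1]; congr 1
    rw [h, hdiag]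
  have e5 : A2 * P2 = A2 := by
    rw [← e2, Matrix.mul_assoc, proj_idem hVtO]
  have e6 : A2ᵀ * Q2 = A2ᵀ := by
    have h1 : A2ᵀ = Aᵀ * Q2 := by
      rw [← e1, Matrix.transpose_mul, proj_transpose]
    rw [h1, Matrix.mul_assoc, proj_idem hUrO]
  have e7 : P2 * Aᵀ = A2ᵀ := by
    rw [← e2, Matrix.transpose_mul, proj_transpose]
  set bU := spec (Q2 * Uhr) with hbU
  set aV := spec (P2 * Vht) with haV
  have hbU0 : 0 ≤ bU := spec_nonneg _
  have haV0 : 0 ≤ aV := spec_nonneg _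
  have hdle : ∀ c : Fin r, σh ≤ Sh (Fin.castLE hrm.le c) (Fin.castLE hrn.le c) := by
    intro c
    rw [hσhdef]
    exact hhdesc (c : ℕ) (r-1) (by omega) (by omega) (by omega) (by omega) (by omega)
  -- inequality A
  have mA : (Q2 * Uhr) * Sig1 = Q2 * (Ah - A) * Vht + A2 * (P2 * Vht) := by
    have h1 : Q2 * Ah * Vht = (Q2 * Uhr) * Sig1 := by
      rw [Matrix.mul_assoc, e3, Matrix.mul_assoc]
    have h2 : Q2 * A * Vht = A2 * (P2 * Vht) := by
      rw [e1, ← Matrix.mul_assoc, e5]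
    have hsub : Q2 * (Ah - A) * Vht = Q2 * Ah * Vht - Q2 * A * Vht := by
      rw [Matrix.mul_sub, Matrix.sub_mul]
    rw [hsub, h1, h2]
    abel
  have specQdV : spec (Q2 * (Ah - A) * Vht) ≤ δ := by
    calc spec (Q2 * (Ah - A) * Vht) ≤ spec (Q2 * (Ah - A)) * spec Vht := spec_mul_le _ _
      _ ≤ spec (Q2 * (Ah - A)) * 1 := by
          apply mul_le_mul_of_nonneg_left (spec_le_one_of_iso hVhtO) (spec_nonneg _)
      _ = spec (Q2 * (Ah - A)) := mul_one _
      _ ≤ spec Q2 * spec (Ah - A) := spec_mul_le _ _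
      _ ≤ 1 * spec (Ah - A) := by
          apply mul_le_mul_of_nonneg_right (spec_proj_compl_le_one hUrO) (spec_nonneg _)
      _ = spec (Ah - A) := one_mul _
      _ = δ := by rw [hδdef, spec_sub_comm]
  have hA2le : spec A2 ≤ τ := by
    rw [hA2, hτdef]
    exact spec_a2_le hrm hrn ⟨hAU, hAV, hAeq, hAd, hAnn, hAdesc⟩
  have hA2tle : spec A2ᵀ ≤ τ := by
    rw [hA2, hτdef]
    exact spec_a2t_le hrm hrn ⟨hAU, hAV, hAeq, hAd, hAnn, hAdesc⟩
  have specA2P : spec (A2 * (P2 * Vht)) ≤ τ * aV := by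
    calc spec (A2 * (P2 * Vht)) ≤ spec A2 * spec (P2 * Vht) := spec_mul_le _ _
      _ ≤ τ * aV := mul_le_mul_of_nonneg_right hA2le (spec_nonneg _)
  have ineqA : σh * bU ≤ δ + τ * aV := by
    calc σh * bU ≤ spec ((Q2 * Uhr) * Sig1) := sigma_spec_le_spec_mul_diag _ hσh0 hdle
      _ = spec (Q2 * (Ah - A) * Vht + A2 * (P2 * Vht)) := by rw [mA]
      _ ≤ spec (Q2 * (Ah - A) * Vht) + spec (A2 * (P2 * Vht)) := spec_add_le _ _
      _ ≤ δ + τ * aV := add_le_add specQdV specA2P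
  -- inequality B
  have mB : (P2 * Vht) * Sig1 = P2 * (Ahᵀ - Aᵀ) * Uhr + A2ᵀ * (Q2 * Uhr) := by
    have h1 : P2 * Ahᵀ * Uhr = (P2 * Vht) * Sig1 := by
      rw [Matrix.mul_assoc, e4, Matrix.mul_assoc]
    have h2 : P2 * Aᵀ * Uhr = A2ᵀ * (Q2 * Uhr) := by
      rw [e7, ← Matrix.mul_assoc, e6]
    have hsub : P2 * (Ahᵀ - Aᵀ) * Uhr = P2 * Ahᵀ * Uhr - P2 * Aᵀ * Uhr := by
      rw [Matrix.mul_sub, Matrix.sub_mul]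
    rw [hsub, h1, h2]
    abel
  have specPdU : spec (P2 * (Ahᵀ - Aᵀ) * Uhr) ≤ δ := by
    have hts : spec (Ahᵀ - Aᵀ) ≤ δ := by
      have h1 : Ahᵀ - Aᵀ = (Ah - A)ᵀ := (Matrix.transpose_sub _ _).symm
      rw [h1]
      calc spec ((Ah - A)ᵀ) ≤ spec (Ah - A) := spec_transpose_le _
        _ = δ := by rw [hδdef, spec_sub_comm]
    calc spec (P2 * (Ahᵀ - Aᵀ) * Uhr) ≤ spec (P2 * (Ahᵀ - Aᵀ)) * spec Uhr := spec_mul_le _ _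
      _ ≤ spec (P2 * (Ahᵀ - Aᵀ)) * 1 := by
          apply mul_le_mul_of_nonneg_left (spec_le_one_of_iso hUhrO) (spec_nonneg _)
      _ = spec (P2 * (Ahᵀ - Aᵀ)) := mul_one _
      _ ≤ spec P2 * spec (Ahᵀ - Aᵀ) := spec_mul_le _ _
      _ ≤ 1 * spec (Ahᵀ - Aᵀ) := by
          apply mul_le_mul_of_nonneg_right (spec_proj_compl_le_one hVtO) (spec_nonneg _)
      _ = spec (Ahᵀ - Aᵀ) := one_mul _
      _ ≤ δ := hts
  have specA2tQ : spec (A2ᵀ * (Q2 * Uhr)) ≤ τ * bU := by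
    calc spec (A2ᵀ * (Q2 * Uhr)) ≤ spec A2ᵀ * spec (Q2 * Uhr) := spec_mul_le _ _
      _ ≤ τ * bU := mul_le_mul_of_nonneg_right hA2tle (spec_nonneg _)
  have ineqB : σh * aV ≤ δ + τ * bU := by
    calc σh * aV ≤ spec ((P2 * Vht) * Sig1) := sigma_spec_le_spec_mul_diag _ hσh0 hdle
      _ = spec (P2 * (Ahᵀ - Aᵀ) * Uhr + A2ᵀ * (Q2 * Uhr)) := by rw [mB]
      _ ≤ spec (P2 * (Ahᵀ - Aᵀ) * Uhr) + spec (A2ᵀ * (Q2 * Uhr)) := spec_add_le _ _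
      _ ≤ δ + τ * bU := add_le_add specPdU specA2tQ
  -- combine
  have hcomb : (σh - τ) * max bU aV ≤ δ := by
    rcases max_cases bU aV with ⟨hmax, hge⟩ | ⟨hmax, hge⟩
    · rw [hmax, sub_mul]
      linarith [ineqA, mul_le_mul_of_nonneg_left hge hτ0]
    · rw [hmax, sub_mul]
      linarith [ineqB, mul_le_mul_of_nonneg_left hge.le hτ0]
  have htle : spec (Q2 * (Uhr * Uhrᵀ)) ≤ bU := by
    calc spec (Q2 * (Uhr * Uhrᵀ)) = spec ((Q2 * Uhr) * Uhrᵀ) := by rw [Matrix.mul_assoc]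
      _ ≤ spec (Q2 * Uhr) * spec Uhrᵀ := spec_mul_le _ _
      _ ≤ bU * 1 := by
          apply mul_le_mul_of_nonneg_left (spec_transpose_le_one_of_iso hUhrO) hbU0
      _ = bU := mul_one _
  have ht0 : 0 ≤ spec (Q2 * (Uhr * Uhrᵀ)) := spec_nonneg _
  rcases le_or_gt (σh - τ) 0 with hneg | hpos
  · calc (σh - τ) * spec (Q2 * (Uhr * Uhrᵀ)) ≤ 0 := mul_nonpos_of_nonpos_of_nonneg hneg ht0
      _ ≤ δ := hδ
  · calc (σh - τ) * spec (Q2 * (Uhr * Uhrᵀ)) ≤ (σh - τ) * bU := by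
          apply mul_le_mul_of_nonneg_left htle hpos.le
      _ ≤ (σh - τ) * max bU aV := by
          apply mul_le_mul_of_nonneg_left (le_max_left _ _) hpos.le
      _ ≤ δ := hcomb

lemma sinTheta_spec_le_one {k r : ℕ} {E F : Matrix (Fin k) (Fin r) ℝ}
    (hE : Eᵀ * E = 1) (hF : Fᵀ * F = 1) :
    spec ((1 - E * Eᵀ) * (F * Fᵀ)) ≤ 1 := by
  calc spec ((1 - E * Eᵀ) * (F * Fᵀ)) ≤ spec (1 - E * Eᵀ) * spec (F * Fᵀ) := spec_mul_le _ _
    _ ≤ 1 * spec (F * Fᵀ) := by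
        apply mul_le_mul_of_nonneg_right (spec_proj_compl_le_one hE) (spec_nonneg _)
    _ = spec (F * Fᵀ) := one_mul _
    _ ≤ spec F * spec Fᵀ := spec_mul_le _ _
    _ ≤ 1 * 1 := by
        apply mul_le_mul (spec_le_one_of_iso hF) (spec_transpose_le_one_of_iso hF)
          (spec_nonneg _) zero_le_one
    _ = 1 := mul_one 1

lemma combine {gap σh τ δ t : ℝ} (h1 : gap ≤ σh + δ - τ) (h2 : (σh - τ) * t ≤ δ)
    (ht0 : 0 ≤ t) (ht1 : t ≤ 1) (hδ : 0 ≤ δ) : gap * t ≤ 2 * δ := by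
  nlinarith [mul_le_mul_of_nonneg_right h1 ht0, mul_le_of_le_one_right hδ ht1]

theorem stmt3_main {m n r : ℕ} (hr1 : 1 ≤ r) (hrm : r < m) (hrn : r < n)
    (A Ah : Matrix (Fin m) (Fin n) ℝ)
    (Ur Uhr : Matrix (Fin m) (Fin r) ℝ) (Vr Vhr : Matrix (Fin n) (Fin r) ℝ)
    (hUr : IsLeftSingTrunc A r Ur) (hVr : IsRightSingTrunc A r Vr)
    (hUhr : IsLeftSingTrunc Ah r Uhr) (hVhr : IsRightSingTrunc Ah r Vhr) :
    (singVal A r - singVal A (r+1)) *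
      max (spec (sinThetaMat Vr Vhr)) (spec (sinThetaMat Ur Uhr))
      ≤ 2 * spec (A - Ah) := by
  obtain ⟨U, S, V, hA, hm, hUrE⟩ := hUr
  obtain ⟨V1, S1, U1, hAt, hn1, hVrE⟩ := hVr
  obtain ⟨Uh, Sh, Vh, hAh, hmh, hUhrE⟩ := hUhr
  obtain ⟨Vh1, Sh1, Uh1, hAht, hnh, hVhrE⟩ := hVhr
  set δ := spec (A - Ah) with hδdef
  have hδ : 0 ≤ δ := spec_nonneg _
  -- convert entry hypotheses to castLE form
  have hUrE' : ∀ i j, Ur i j = U i (Fin.castLE hrm.le j) := fun i j => hUrE i j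
  have hVrE' : ∀ i j, Vr i j = V1 i (Fin.castLE hrn.le j) := fun i j => hVrE i j
  have hUhrE' : ∀ i j, Uhr i j = Uh i (Fin.castLE hrm.le j) := fun i j => hUhrE i j
  have hVhrE' : ∀ i j, Vhr i j = Vh1 i (Fin.castLE hrn.le j) := fun i j => hVhrE i j
  -- U side
  set tU := spec (sinThetaMat Ur Uhr) with htU
  set tV := spec (sinThetaMat Vr Vhr) with htV
  have htU0 : 0 ≤ tU := spec_nonneg _
  have htV0 : 0 ≤ tV := spec_nonneg _
  have htU1 : tU ≤ 1 := by
    rw [htU, sinThetaMat]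
    exact sinTheta_spec_le_one (trunc_orth hrm.le hA.1 hUrE') (trunc_orth hrm.le hAh.1 hUhrE')
  have htV1 : tV ≤ 1 := by
    rw [htV, sinThetaMat]
    exact sinTheta_spec_le_one (trunc_orth hrn.le hAt.1 hVrE') (trunc_orth hrn.le hAht.1 hVhrE')
  have coreU : (Sh ⟨r-1, by omega⟩ ⟨r-1, by omega⟩ - S ⟨r, hrm⟩ ⟨r, hrn⟩) * tU ≤ δ := by
    rw [htU, sinThetaMat, hδdef]
    exact wedin_core hr1 hrm hrn hA hAh hUrE' hUhrE'
  have coreV : (Sh1 ⟨r-1, by omega⟩ ⟨r-1, by omega⟩ - S1 ⟨r, hrn⟩ ⟨r, hrm⟩) * tV ≤ δ := by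
    have h := wedin_core hr1 hrn hrm hAt hAht hVrE' hVhrE'
    have hd : spec (Aᵀ - Ahᵀ) ≤ δ := by
      have heq : Aᵀ - Ahᵀ = (A - Ah)ᵀ := (Matrix.transpose_sub _ _).symm
      rw [heq, hδdef]
      exact spec_transpose_le _
    rw [htV, sinThetaMat]
    calc (Sh1 ⟨r-1, by omega⟩ ⟨r-1, by omega⟩ - S1 ⟨r, hrn⟩ ⟨r, hrm⟩) *
          spec ((1 - Vr * Vrᵀ) * (Vhr * Vhrᵀ)) ≤ spec (Aᵀ - Ahᵀ) := h
      _ ≤ δ := hd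
  -- singular value comparisons, U side
  have hsAh0 : 0 ≤ singVal Ah r := by
    have h1 := cf_easy hAh hr1 hrm.le hrn.le
    have h2 : 0 ≤ Sh ⟨r-1, by omega⟩ ⟨r-1, by omega⟩ := hAh.2.2.2.2.1 _ _
    linarith
  have gapU : singVal A r - singVal A (r+1) ≤
      Sh ⟨r-1, by omega⟩ ⟨r-1, by omega⟩ + δ - S ⟨r, hrm⟩ ⟨r, hrn⟩ := by
    have h1 : singVal A r ≤ singVal Ah r + δ := by
      rw [hδdef]; exact weyl hr1 hsAh0
    have h2 : singVal Ah r ≤ Sh ⟨r-1, by omega⟩ ⟨r-1, by omega⟩ :=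
      cf_hard hAh hr1 hrm.le hrn.le
    have h3 : S ⟨r, hrm⟩ ⟨r, hrn⟩ ≤ singVal A (r+1) := by
      have := cf_easy hA (j := r+1) (by omega) (by omega) (by omega)
      convert this using 3 <;> omega
    linarith
  -- singular value comparisons, V side
  have hsAht0 : 0 ≤ singVal Ahᵀ r := by
    have h1 := cf_easy hAht hr1 hrn.le hrm.le
    have h2 : 0 ≤ Sh1 ⟨r-1, by omega⟩ ⟨r-1, by omega⟩ := hAht.2.2.2.2.1 _ _
    linarith
  have gapV : singVal A r - singVal A (r+1) ≤
      Sh1 ⟨r-1, by omega⟩ ⟨r-1, by omega⟩ + δ - S1 ⟨r, hrn⟩ ⟨r, hrm⟩ := by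
    have h1 : singVal A r ≤ S ⟨r-1, by omega⟩ ⟨r-1, by omega⟩ :=
      cf_hard hA hr1 hrm.le hrn.le
    have h2 : S ⟨r-1, by omega⟩ ⟨r-1, by omega⟩ ≤ singVal Aᵀ r := by
      have := cf_easy (IsSVD.transpose' hA) hr1 hrn.le hrm.le
      exact this
    have h3 : singVal Aᵀ r ≤ singVal Ahᵀ r + spec (Aᵀ - Ahᵀ) := weyl hr1 hsAht0
    have h4 : spec (Aᵀ - Ahᵀ) ≤ δ := by
      have heq : Aᵀ - Ahᵀ = (A - Ah)ᵀ := (Matrix.transpose_sub _ _).symm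
      rw [heq, hδdef]
      exact spec_transpose_le _
    have h5 : singVal Ahᵀ r ≤ Sh1 ⟨r-1, by omega⟩ ⟨r-1, by omega⟩ :=
      cf_hard hAht hr1 hrn.le hrm.le
    have h6 : S1 ⟨r, hrn⟩ ⟨r, hrm⟩ ≤ singVal Aᵀ (r+1) := by
      have := cf_easy hAt (j := r+1) (by omega) (by omega) (by omega)
      convert this using 3 <;> omega
    have h7 : singVal Aᵀ (r+1) ≤ S ⟨r, hrm⟩ ⟨r, hrn⟩ := by
      have := cf_hard (IsSVD.transpose' hA) (j := r+1) (by omega) (by omega) (by omega)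
      have heq : Sᵀ ⟨r+1-1, by omega⟩ ⟨r+1-1, by omega⟩ = S ⟨r, hrm⟩ ⟨r, hrn⟩ := by
        rw [Matrix.transpose_apply]
        congr 1 <;> omega
      rw [heq] at this
      exact this
    have h8 : S ⟨r, hrm⟩ ⟨r, hrn⟩ ≤ singVal A (r+1) := by
      have := cf_easy hA (j := r+1) (by omega) (by omega) (by omega)
      convert this using 3 <;> omega
    linarith
  have finU : (singVal A r - singVal A (r+1)) * tU ≤ 2 * δ :=
    combine gapU coreU htU0 htU1 hδ
  have finV : (singVal A r - singVal A (r+1)) * tV ≤ 2 * δ :=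
    combine gapV coreV htV0 htV1 hδ
  rcases max_cases tV tU with ⟨hmax, -⟩ | ⟨hmax, -⟩ <;> rw [hmax]
  · exact finV
  · exact finU

end W

end MJ

open MJ in
/-- combination of Wedin's perturbation theorem and Weyl's bound. -/
theorem stmt3 {m n r : ℕ} (hr1 : 1 ≤ r) (hrm : r < m) (hrn : r < n)
    (A Ah : Matrix (Fin m) (Fin n) ℝ)
    (Ur Uhr : Matrix (Fin m) (Fin r) ℝ) (Vr Vhr : Matrix (Fin n) (Fin r) ℝ)
    (hUr : IsLeftSingTrunc A r Ur) (hVr : IsRightSingTrunc A r Vr)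
    (hUhr : IsLeftSingTrunc Ah r Uhr) (hVhr : IsRightSingTrunc Ah r Vhr) :
    (singVal A r - singVal A (r+1)) *
      max (spec (sinThetaMat Vr Vhr)) (spec (sinThetaMat Ur Uhr))
      ≤ 2 * spec (A - Ah) :=
  MJ.W.stmt3_main hr1 hrm hrn A Ah Ur Uhr Vr Vhr hUr hVr hUhr hVhr
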